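/- Let n be a positive integer whose length spectrum S = lspec(n) has strictly more odd elements than even elements. Then the greatest odd divisor of n equals the product of the maximum and the minimum of the difference set D(S). -/
import Mathlib


/-- The length spectrum of `n`: the set of lengths `l` of decompositions of `n`,
i.e. sequences `a, a+1, ..., a+(l-1)` of `l ≥ 1` consecutive positive integers summing to `n`. -/
def lspec (n : ℕ) : Set ℕ :=
  {l | 0 < l ∧ ∃ a : ℕ, 0 < a ∧ ∑ i ∈ Finset.range l, (a + i) = n}

/-- `A₀`: the even elements of `A`. -/
def evens (A : Set ℕ) : Set ℕ := {x ∈ A | Even x}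

/-- `A₁`: the odd elements of `A`. -/
def odds (A : Set ℕ) : Set ℕ := {x ∈ A | Odd x}

/-- The spectral class of `n`: positive integers with the same length spectrum as `n`. -/
def specClass (n : ℕ) : Set ℕ := {m | 0 < m ∧ lspec m = lspec n}

/-- A set is balanced if it has equally many even and odd elements. -/
def balancedSet (S : Set ℕ) : Prop := (evens S).encard = (odds S).encard

/-- A set is unmixed if it has no even elements. -/
def unmixedSet (S : Set ℕ) : Prop := evens S = ∅

/-- A set is lopsided if it is neither balanced nor unmixed. -/
def lopsidedSet (S : Set ℕ) : Prop := ¬ balancedSet S ∧ ¬ unmixedSet S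

/-- The set of ratios `m'/m` over pairs of complementary factors `m ≤ m'` of `k`;
`q(k)` is the least element of this set. -/
def qSet (k : ℕ) : Set ℚ :=
  {r | ∃ m m' : ℕ, 0 < m ∧ m ≤ m' ∧ m * m' = k ∧ r = (m' : ℚ) / (m : ℚ)}

/-- The exceptional set `E(S)`: numbers `a = b·c` with `b, c ∈ S₁`, `a > max S₀`, and
whose set of divisors of `(max S₁)·a` strictly below `a` is exactly `S₁`. -/
def excSet (S : Set ℕ) : Set ℕ :=
  {a | (∃ b ∈ odds S, ∃ c ∈ odds S, a = b * c) ∧ sSup (evens S) < a ∧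
    {d | d ∣ sSup (odds S) * a ∧ d < a} = odds S}

/-- `P(S)`: the primes strictly greater than `max S₀`. -/
def primesAbove (S : Set ℕ) : Set ℕ := {p | p.Prime ∧ sSup (evens S) < p}

/-- A balanced spectrum is non-excessive if `S₁` is exactly the set of divisors of `max S₁`. -/
def nonExcessive (S : Set ℕ) : Prop := odds S = {d | d ∣ sSup (odds S)}

/-- `γ_p`: the largest `k` with `p^k ∈ S₁`. -/
noncomputable def gammaIdx (S : Set ℕ) (p : ℕ) : ℕ := sSup {k | p ^ k ∈ odds S}

/-- `μ_p = v_p(max S₁)`. -/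
noncomputable def muIdx (S : Set ℕ) (p : ℕ) : ℕ := (sSup (odds S)).factorization p

/-- The excessive index `ε_p = γ_p − μ_p` of a prime `p` with respect to `S`. -/
noncomputable def excIdx (S : Set ℕ) (p : ℕ) : ℕ := gammaIdx S p - muIdx S p

/-- The difference set `D(S)`: `S₁` with its `|S₀|` smallest elements removed when
`|S₀| ≤ |S₁|`, and empty otherwise.  An element `x` of `S₁` survives exactly when at least
`|S₀|` elements of `S₁` lie strictly below it. -/
def diffSet (S : Set ℕ) : Set ℕ :=
  {x ∈ odds S | (evens S).encard ≤ {y ∈ odds S | y < x}.encard}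

section Aux

private lemma sum_lem (l b : ℕ) :
    2 * ∑ i ∈ Finset.range l, (b + 1 + i) = l * (2 * b + l + 1) := by
  rw [Finset.sum_add_distrib, Finset.sum_const, Finset.card_range, smul_eq_mul]
  cases l with
  | zero => simp
  | succ j =>
    have h : (∑ i ∈ Finset.range (j + 1), i) * 2 = (j + 1) * j := by
      rw [Finset.sum_range_id_mul_two]; simp
    calc 2 * ((j + 1) * (b + 1) + ∑ i ∈ Finset.range (j + 1), i)
        = 2 * (j + 1) * (b + 1) + (∑ i ∈ Finset.range (j + 1), i) * 2 := by ring
      _ = 2 * (j + 1) * (b + 1) + (j + 1) * j := by rw [h]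
      _ = (j + 1) * (2 * b + (j + 1) + 1) := by ring

private lemma mem_lspec_iff {n l : ℕ} (hn : 0 < n) :
    l ∈ lspec n ↔ ∃ k, l < k ∧ Odd (l + k) ∧ l * k = 2 * n := by
  constructor
  · rintro ⟨hl, a, ha, hsum⟩
    obtain ⟨b, rfl⟩ : ∃ b, a = b + 1 := ⟨a - 1, by omega⟩
    exact ⟨2 * b + l + 1, by omega, ⟨l + b, by ring⟩, by rw [← hsum, ← sum_lem l b]⟩
  · rintro ⟨k, hlk, ⟨t, ht⟩, hmul⟩
    have hl : 0 < l := by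
      rcases Nat.eq_zero_or_pos l with rfl | h
      · simp at hmul; omega
      · exact h
    have hk : k = 2 * (t - l) + l + 1 := by omega
    have hs := sum_lem l (t - l)
    have h2 : l * (2 * (t - l) + l + 1) = 2 * n := by rw [← hk]; exact hmul
    exact ⟨hl, (t - l) + 1, by omega, by omega⟩

private lemma odd_dvd_ordCompl {n l : ℕ} (hn : n ≠ 0) (hodd : Odd l) (hdvd : l ∣ 2 * n) :
    l ∣ ordCompl[2] n := by
  have h2 : l.Coprime 2 := Nat.coprime_comm.mp
    ((Nat.prime_two.coprime_iff_not_dvd).2 (by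
      intro hc; rw [Nat.odd_iff] at hodd; omega))
  have hln : l ∣ n := h2.dvd_of_dvd_mul_left hdvd
  have hcop : l.Coprime (2 ^ n.factorization 2) := h2.pow_right _
  exact hcop.dvd_of_dvd_mul_left (by rw [Nat.ordProj_mul_ordCompl_eq_self n 2]; exact hln)

private lemma odds_lspec_eq {n : ℕ} (hn : 0 < n) :
    odds (lspec n) = ↑((ordCompl[2] n).divisors.filter (fun d => d * d < 2 * n)) := by
  have hn0 : n ≠ 0 := hn.ne'
  have hm0 : ordCompl[2] n ≠ 0 := (Nat.ordCompl_pos 2 hn0).ne'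
  have hmodd : ¬ 2 ∣ ordCompl[2] n := Nat.not_dvd_ordCompl Nat.prime_two hn0
  ext l
  simp only [odds, Set.mem_setOf_eq, Finset.coe_filter, Nat.mem_divisors]
  constructor
  · rintro ⟨hmem, hodd⟩
    obtain ⟨k, hlk, hoddsum, hmul⟩ := (mem_lspec_iff hn).mp hmem
    have hdvd : l ∣ ordCompl[2] n := odd_dvd_ordCompl hn0 hodd ⟨k, hmul.symm⟩
    have hl0 : 0 < l := Nat.pos_of_dvd_of_pos hdvd (Nat.pos_of_ne_zero hm0)
    exact ⟨⟨hdvd, hm0⟩, by nlinarith⟩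
  · rintro ⟨⟨hdvd, -⟩, hlt⟩
    have hlodd : Odd l := by
      rw [Nat.odd_iff]
      have : ¬ 2 ∣ l := fun hc => hmodd (hc.trans hdvd)
      omega
    have hl0 : 0 < l := Nat.pos_of_dvd_of_pos hdvd (Nat.pos_of_ne_zero hm0)
    have hln : l ∣ n := hdvd.trans (Nat.ordCompl_dvd n 2)
    have hl2n : l ∣ 2 * n := hln.mul_left 2
    have hmul : l * (2 * n / l) = 2 * n := Nat.mul_div_cancel' hl2n
    have hk2 : 2 * n / l = 2 * (n / l) := by
      rw [Nat.mul_div_assoc 2 hln]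
    refine ⟨(mem_lspec_iff hn).mpr ⟨2 * n / l, ?_, ?_, hmul⟩, hlodd⟩
    · have : l * l < l * (2 * n / l) := by rw [hmul]; exact hlt
      exact lt_of_mul_lt_mul_left this (Nat.zero_le l)
    · rw [hk2]; rcases hlodd with ⟨t, ht⟩; exact ⟨t + n / l, by omega⟩

private lemma evens_lspec_eq {n : ℕ} (hn : 0 < n) :
    evens (lspec n) =
      ↑(((ordCompl[2] n).divisors.filter (fun d => 2 * n < d * d)).image (fun k => 2 * n / k)) := by
  have hn0 : n ≠ 0 := hn.ne'
  have hm0 : ordCompl[2] n ≠ 0 := (Nat.ordCompl_pos 2 hn0).ne'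
  have hmodd : ¬ 2 ∣ ordCompl[2] n := Nat.not_dvd_ordCompl Nat.prime_two hn0
  ext l
  simp only [evens, Set.mem_setOf_eq, Finset.coe_image, Set.mem_image, Finset.mem_coe,
    Finset.mem_filter, Nat.mem_divisors]
  constructor
  · rintro ⟨hmem, hleven⟩
    obtain ⟨k, hlk, hoddsum, hmul⟩ := (mem_lspec_iff hn).mp hmem
    have hkodd : Odd k := by
      rcases hleven with ⟨c, hc⟩; rcases hoddsum with ⟨t, ht⟩
      exact ⟨t - c, by omega⟩
    have hk0 : 0 < k := by omega
    have hdvd : k ∣ ordCompl[2] n := odd_dvd_ordCompl hn0 hkodd ⟨l, by rw [← hmul]; ring⟩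
    refine ⟨k, ⟨⟨hdvd, hm0⟩, ?_⟩, ?_⟩
    · nlinarith
    · rw [← hmul, Nat.mul_div_cancel _ hk0]
  · rintro ⟨k, ⟨⟨hdvd, -⟩, hgt⟩, rfl⟩
    have hkodd : Odd k := by
      rw [Nat.odd_iff]
      have : ¬ 2 ∣ k := fun hc => hmodd (hc.trans hdvd)
      omega
    have hk0 : 0 < k := Nat.pos_of_dvd_of_pos hdvd (Nat.pos_of_ne_zero hm0)
    have hkn : k ∣ n := hdvd.trans (Nat.ordCompl_dvd n 2)
    have hk2n : k ∣ 2 * n := hkn.mul_left 2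
    have hmul : (2 * n / k) * k = 2 * n := Nat.div_mul_cancel hk2n
    have hlk : 2 * n / k < k := by
      have : (2 * n / k) * k < k * k := by rw [hmul]; exact hgt
      exact lt_of_mul_lt_mul_right this (Nat.zero_le k)
    have hleven : Even (2 * n / k) := by
      rw [Nat.mul_div_assoc 2 hkn]; exact ⟨n / k, by ring⟩
    refine ⟨(mem_lspec_iff hn).mpr ⟨k, hlk, ?_, hmul⟩, hleven⟩
    rcases hkodd with ⟨t, ht⟩; rcases hleven with ⟨c, hc⟩
    exact ⟨c + t, by omega⟩

end Aux

/-- If `lspec n` has more odd than even elements, then the greatest odd divisor of `n`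
is the product of the maximum and the minimum of the difference set of `lspec n`. -/
theorem greatest_odd_factor_eq (n : ℕ) (hn : 0 < n)
    (h : (evens (lspec n)).encard < (odds (lspec n)).encard) :
    ordCompl[2] n = sSup (diffSet (lspec n)) * sInf (diffSet (lspec n)) := by
  have hn0 : n ≠ 0 := hn.ne'
  obtain ⟨m, hmdef⟩ : ∃ m, ordCompl[2] n = m := ⟨_, rfl⟩
  have hm0 : m ≠ 0 := hmdef ▸ (Nat.ordCompl_pos 2 hn0).ne'
  have hm2 : ¬ 2 ∣ m := hmdef ▸ Nat.not_dvd_ordCompl Nat.prime_two hn0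
  have hmn : m ∣ n := hmdef ▸ Nat.ordCompl_dvd n 2
  have hodd_of_dvd : ∀ d : ℕ, d ∣ m → d % 2 = 1 := by
    intro d hd
    have : ¬ 2 ∣ d := fun hc => hm2 (hc.trans hd)
    omega
  have hne : ∀ d : ℕ, d ∣ m → d * d ≠ 2 * n := by
    intro d hd heq
    have h1 := hodd_of_dvd d hd
    have h2 : d * d % 2 = 1 := by rw [Nat.mul_mod, h1]
    omega
  set A := m.divisors.filter (fun d => d * d < 2 * n) with hA
  set B := m.divisors.filter (fun d => 2 * n < d * d) with hB
  set C := m.divisors.filter (fun d => 2 * n < (m / d) * (m / d)) with hC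
  set F := m.divisors.filter (fun d => d * d < 2 * n ∧ (m / d) * (m / d) < 2 * n) with hF
  have hdivmem : ∀ d ∈ m.divisors, (m / d) ∈ m.divisors ∧ m / (m / d) = d := by
    intro d hd
    rw [Nat.mem_divisors] at hd
    exact ⟨Nat.mem_divisors.mpr ⟨Nat.div_dvd_of_dvd hd.1, hm0⟩, Nat.div_div_self hd.1 hm0⟩
  have hBC : B.card = C.card := by
    apply Finset.card_bij' (fun d _ => m / d) (fun d _ => m / d)
    · intro a ha
      rw [hB, Finset.mem_filter] at ha
      obtain ⟨hmem, hinv⟩ := hdivmem a ha.1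
      exact Finset.mem_filter.mpr ⟨hmem, by rw [hinv]; exact ha.2⟩
    · intro a ha
      rw [hC, Finset.mem_filter] at ha
      obtain ⟨hmem, hinv⟩ := hdivmem a ha.1
      exact Finset.mem_filter.mpr ⟨hmem, ha.2⟩
    · intro a ha; exact (hdivmem a (Finset.mem_filter.mp ha).1).2
    · intro a ha; exact (hdivmem a (Finset.mem_filter.mp ha).1).2
  have hEo : odds (lspec n) = ↑A := by rw [hA, ← hmdef]; exact odds_lspec_eq hn
  have hEe : evens (lspec n) = ↑(B.image (fun k => 2 * n / k)) := by
    rw [hB, ← hmdef]; exact evens_lspec_eq hn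
  have hdvd2n : ∀ d : ℕ, d ∣ m → d ∣ 2 * n := fun d hd => (hd.trans hmn).mul_left 2
  have himg : (B.image (fun k => 2 * n / k)).card = B.card := by
    apply Finset.card_image_of_injOn
    intro x hx y hy hxy
    have hxm : x ∣ m := (Nat.mem_divisors.mp (Finset.mem_filter.mp hx).1).1
    have hym : y ∣ m := (Nat.mem_divisors.mp (Finset.mem_filter.mp hy).1).1
    have h2n0 : 2 * n ≠ 0 := by omega
    calc x = 2 * n / (2 * n / x) := (Nat.div_div_self (hdvd2n x hxm) h2n0).symm
      _ = 2 * n / (2 * n / y) := by rw [show 2 * n / x = 2 * n / y from hxy]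
      _ = y := Nat.div_div_self (hdvd2n y hym) h2n0
  have hcard : B.card < A.card := by
    rw [hEo, hEe, Set.encard_coe_eq_coe_finsetCard, Set.encard_coe_eq_coe_finsetCard,
      himg] at h
    exact_mod_cast h
  have hCA : C.card < A.card := hBC ▸ hcard
  have hD : diffSet (lspec n) = ↑F := by
    ext x
    simp only [diffSet, Set.mem_setOf_eq, Set.mem_sep_iff]
    rw [hEo, hEe, Set.encard_coe_eq_coe_finsetCard, himg, Finset.mem_coe]
    have hsetfilter : {y ∈ (↑A : Set ℕ) | y < x} = ↑(A.filter (fun y => y < x)) :=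
      (Finset.coe_filter _ _).symm
    rw [hsetfilter, Set.encard_coe_eq_coe_finsetCard, Nat.cast_le]
    simp only [Finset.mem_coe]
    constructor
    · rintro ⟨hxA, hle⟩
      have hxA' := Finset.mem_filter.mp hxA
      have hxm : x ∣ m := (Nat.mem_divisors.mp hxA'.1).1
      have hx0 : 0 < x := Nat.pos_of_dvd_of_pos hxm (Nat.pos_of_ne_zero hm0)
      rw [hF, Finset.mem_filter]
      refine ⟨hxA'.1, hxA'.2, ?_⟩
      by_contra hcon
      push_neg at hcon
      have hxC : x ∈ C := by
        rw [hC, Finset.mem_filter]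
        exact ⟨hxA'.1, lt_of_le_of_ne hcon (Ne.symm (hne _ (Nat.div_dvd_of_dvd hxm)))⟩
      have hss : A.filter (fun y => y < x) ⊂ C := by
        constructor
        · intro y hy
          have hy' := Finset.mem_filter.mp hy
          have hy'' := Finset.mem_filter.mp hy'.1
          have hym : y ∣ m := (Nat.mem_divisors.mp hy''.1).1
          have hy0 : 0 < y := Nat.pos_of_dvd_of_pos hym (Nat.pos_of_ne_zero hm0)
          have hdivle : m / x ≤ m / y := Nat.div_le_div_left (le_of_lt hy'.2) hy0
          rw [hC, Finset.mem_filter]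
          refine ⟨hy''.1, ?_⟩
          have := (Finset.mem_filter.mp hxC).2
          calc 2 * n < (m / x) * (m / x) := this
            _ ≤ (m / y) * (m / y) := Nat.mul_le_mul hdivle hdivle
        · intro hcc
          have := hcc hxC
          simp at this
      have := Finset.card_lt_card hss
      omega
    · intro hxF
      have hxF' := Finset.mem_filter.mp hxF
      have hxm : x ∣ m := (Nat.mem_divisors.mp hxF'.1).1
      have hx0 : 0 < x := Nat.pos_of_dvd_of_pos hxm (Nat.pos_of_ne_zero hm0)
      have hxA : x ∈ A := Finset.mem_filter.mpr ⟨hxF'.1, hxF'.2.1⟩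
      refine ⟨hxA, ?_⟩
      rw [hBC]
      apply Finset.card_le_card
      intro y hy
      have hy' := Finset.mem_filter.mp hy
      have hym : y ∣ m := (Nat.mem_divisors.mp hy'.1).1
      have hyx : y < x := by
        by_contra hcy
        push_neg at hcy
        have : m / y ≤ m / x := Nat.div_le_div_left hcy hx0
        have h1 : (m / y) * (m / y) ≤ (m / x) * (m / x) := Nat.mul_le_mul this this
        have h2 := hxF'.2.2
        have h3 := hy'.2
        omega
      have hyA : y ∈ A := by
        rw [hA, Finset.mem_filter]
        refine ⟨hy'.1, ?_⟩
        have : y * y ≤ x * x := Nat.mul_le_mul (le_of_lt hyx) (le_of_lt hyx)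
        exact lt_of_le_of_lt this hxF'.2.1
      exact Finset.mem_filter.mpr ⟨hyA, hyx⟩
  have hFinv : ∀ d ∈ F, m / d ∈ F := by
    intro d hd
    have hd' := Finset.mem_filter.mp hd
    obtain ⟨hmem, hinv⟩ := hdivmem d hd'.1
    rw [hF, Finset.mem_filter, hinv]
    exact ⟨hmem, hd'.2.2, hd'.2.1⟩
  have hFne : F.Nonempty := by
    have hsub : A \ C ⊆ F := by
      intro d hd
      rw [Finset.mem_sdiff] at hd
      have hd' := Finset.mem_filter.mp hd.1
      have hdm : d ∣ m := (Nat.mem_divisors.mp hd'.1).1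
      have hnotC : ¬ (2 * n < (m / d) * (m / d)) := fun hc =>
        hd.2 (Finset.mem_filter.mpr ⟨hd'.1, hc⟩)
      push_neg at hnotC
      rw [hF, Finset.mem_filter]
      exact ⟨hd'.1, hd'.2, lt_of_le_of_ne hnotC (hne _ (Nat.div_dvd_of_dvd hdm))⟩
    have h1 : A.card ≤ (A \ C).card + C.card := Finset.card_le_card_sdiff_add_card
    have h2 : 0 < (A \ C).card := by omega
    obtain ⟨d, hd⟩ := Finset.card_pos.mp h2
    exact ⟨d, hsub hd⟩
  rw [hmdef, hD, hFne.csSup_eq_max', hFne.csInf_eq_min']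
  have haF := F.min'_mem hFne
  have hbF := F.max'_mem hFne
  have ha_dvd : F.min' hFne ∣ m := (Nat.mem_divisors.mp (Finset.mem_filter.mp haF).1).1
  have hb_dvd : F.max' hFne ∣ m := (Nat.mem_divisors.mp (Finset.mem_filter.mp hbF).1).1
  have h1 : m ≤ F.max' hFne * F.min' hFne := by
    have hma : m / F.min' hFne ∈ F := hFinv _ haF
    have hle : m / F.min' hFne ≤ F.max' hFne := Finset.le_max' F _ hma
    calc m = m / F.min' hFne * F.min' hFne := (Nat.div_mul_cancel ha_dvd).symm
      _ ≤ F.max' hFne * F.min' hFne := Nat.mul_le_mul_right _ hle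
  have h2 : F.max' hFne * F.min' hFne ≤ m := by
    have hmb : m / F.max' hFne ∈ F := hFinv _ hbF
    have hle : F.min' hFne ≤ m / F.max' hFne := Finset.min'_le F _ hmb
    calc F.max' hFne * F.min' hFne ≤ F.max' hFne * (m / F.max' hFne) :=
        Nat.mul_le_mul_left _ hle
      _ = m := Nat.mul_div_cancel' hb_dvd
  exact (le_antisymm h2 h1).symm
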